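/- Let Φ: G → H be a right-resolving graph homomorphism. The stability relation ∼_Φ is a congruence with respect to Φ; that is, for all states I of H, all paths u in H starting at I, and all I₁, I₂ in the fiber of I with I₁ ∼_Φ I₂, we have I₁·u ∼_Φ I₂·u. -/

import Mathlib

/-- A finite directed multigraph. -/
structure FinGraph where
  V : Type
  E : Type
  [fintV : Fintype V]
  [fintE : Fintype E]
  [decV : DecidableEq V]
  [decE : DecidableEq E]
  src : E → V
  tgt : E → V

attribute [instance] FinGraph.fintV FinGraph.fintE FinGraph.decV FinGraph.decE

/-- A graph homomorphism. -/
structure GHom (G H : FinGraph) where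
  eMap : G.E → H.E
  vMap : G.V → H.V
  src_eq : ∀ e, H.src (eMap e) = vMap (G.src e)
  tgt_eq : ∀ e, H.tgt (eMap e) = vMap (G.tgt e)

def GHom.comp {G K H : FinGraph} (Δ : GHom K H) (Ψ : GHom G K) : GHom G H where
  eMap := Δ.eMap ∘ Ψ.eMap
  vMap := Δ.vMap ∘ Ψ.vMap
  src_eq := fun e => by
    simp only [Function.comp_apply, Δ.src_eq, Ψ.src_eq]
  tgt_eq := fun e => by
    simp only [Function.comp_apply, Δ.tgt_eq, Ψ.tgt_eq]

/-- The restriction of a homomorphism to the outgoing edges of a state. -/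
def outMap {G H : FinGraph} (Φ : GHom G H) (I : G.V) :
    {e : G.E // G.src e = I} → {f : H.E // H.src f = Φ.vMap I} :=
  fun e => ⟨Φ.eMap e.1, (Φ.src_eq e.1).trans (congrArg Φ.vMap e.2)⟩

/-- A right-resolver: a surjective homomorphism restricting to a bijection
on the outgoing edges of each state. -/
def IsRR {G H : FinGraph} (Φ : GHom G H) : Prop :=
  Function.Surjective Φ.vMap ∧ ∀ I : G.V, Function.Bijective (outMap Φ I)

/-- `IsPathFrom H I u`: the edge list `u` is a path in `H` starting at `I`. -/
def IsPathFrom (H : FinGraph) : H.V → List H.E → Prop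
  | _, [] => True
  | I, e :: u => H.src e = I ∧ IsPathFrom H (H.tgt e) u

/-- The terminal state of a path starting at `I`. -/
def pathEnd (H : FinGraph) (I : H.V) (u : List H.E) : H.V :=
  u.foldl (fun _ e => H.tgt e) I

/-- One-step transition: `I · a` is the target of the unique edge at `I`
lifting `a` (when `Φ` is right-resolving and `a` starts at the image of `I`). -/
noncomputable def step {G H : FinGraph} (Φ : GHom G H) (I : G.V) (a : H.E) : G.V :=
  if h : ∃ e : G.E, G.src e = I ∧ Φ.eMap e = a then G.tgt h.choose else I

/-- Transition along a word: `I · u`. -/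
noncomputable def transPath {G H : FinGraph} (Φ : GHom G H) (I : G.V) (u : List H.E) : G.V :=
  u.foldl (step Φ) I

/-- The stability relation of a right-resolver. -/
def Stable {G H : FinGraph} (Φ : GHom G H) (I₁ I₂ : G.V) : Prop :=
  Φ.vMap I₁ = Φ.vMap I₂ ∧
  ∀ u : List H.E, IsPathFrom H (Φ.vMap I₁) u →
    ∃ v : List H.E, IsPathFrom H (pathEnd H (Φ.vMap I₁) u) v ∧
      transPath Φ I₁ (u ++ v) = transPath Φ I₂ (u ++ v)

/-- A right-resolver is synchronizing if each fiber of its state map is a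
single stability class. -/
def Synchronizing {G H : FinGraph} (Φ : GHom G H) : Prop :=
  ∀ I₁ I₂ : G.V, Φ.vMap I₁ = Φ.vMap I₂ → Stable Φ I₁ I₂

/-- The fiber of the state map over a state of the codomain. -/
def fiber {G H : FinGraph} (Φ : GHom G H) (I : H.V) : Set G.V := {J | Φ.vMap J = I}

/-- The image `U · u` of a set of states under transition along a word. -/
noncomputable def setTrans {G H : FinGraph} (Φ : GHom G H) (U : Set G.V)
    (u : List H.E) : Set G.V :=
  (fun J => transPath Φ J u) '' U

/-- A minimal image of a right-resolver. -/
def IsMinImage {G H : FinGraph} (Φ : GHom G H) (U : Set G.V) : Prop :=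
  ∃ (I : H.V) (u : List H.E), IsPathFrom H I u ∧ U = setTrans Φ (fiber Φ I) u ∧
    ∀ v : List H.E, IsPathFrom H (pathEnd H I u) v →
      (setTrans Φ U v).ncard = U.ncard

/-- Strong connectedness: a directed path between every ordered pair of states. -/
def StronglyConnected (G : FinGraph) : Prop :=
  ∀ I J : G.V, ∃ u : List G.E, IsPathFrom G I u ∧ pathEnd G I u = J

lemma transPath_append {G H : FinGraph} (Φ : GHom G H) (J : G.V) (u v : List H.E) :
    transPath Φ J (u ++ v) = transPath Φ (transPath Φ J u) v :=
  List.foldl_append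

lemma pathEnd_append (H : FinGraph) (I : H.V) (u v : List H.E) :
    pathEnd H I (u ++ v) = pathEnd H (pathEnd H I u) v :=
  List.foldl_append

lemma isPathFrom_append (H : FinGraph) : ∀ (u : List H.E) (I : H.V) (v : List H.E),
    IsPathFrom H I u → IsPathFrom H (pathEnd H I u) v → IsPathFrom H I (u ++ v)
  | [], I, v, _, hv => hv
  | e :: u, I, v, hu, hv => by
    refine ⟨hu.1, isPathFrom_append H u _ v hu.2 ?_⟩
    exact hv

lemma vMap_step {G H : FinGraph} (Φ : GHom G H) (hΦ : IsRR Φ) (J : G.V) (a : H.E)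
    (ha : H.src a = Φ.vMap J) : Φ.vMap (step Φ J a) = H.tgt a := by
  obtain ⟨e, he⟩ := (hΦ.2 J).2 ⟨a, ha⟩
  have hex : ∃ e : G.E, G.src e = J ∧ Φ.eMap e = a := by
    refine ⟨e.1, e.2, ?_⟩
    exact congrArg Subtype.val he
  rw [step, dif_pos hex]
  obtain ⟨h1, h2⟩ := hex.choose_spec
  rw [← (Φ.tgt_eq _), h2]

lemma vMap_transPath {G H : FinGraph} (Φ : GHom G H) (hΦ : IsRR Φ) :
    ∀ (u : List H.E) (J : G.V), IsPathFrom H (Φ.vMap J) u →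
      Φ.vMap (transPath Φ J u) = pathEnd H (Φ.vMap J) u
  | [], J, _ => rfl
  | a :: u, J, hu => by
    have hs : Φ.vMap (step Φ J a) = H.tgt a := vMap_step Φ hΦ J a hu.1
    have := vMap_transPath Φ hΦ u (step Φ J a) (by rw [hs]; exact hu.2)
    simp only [transPath, pathEnd, List.foldl_cons] at *
    rw [this, hs]

/-- the stability relation is a congruence. -/
theorem stability_is_congruence {G H : FinGraph} (Φ : GHom G H) (hΦ : IsRR Φ)
    (I : H.V) (I₁ I₂ : G.V) (h₁ : Φ.vMap I₁ = I) (h₂ : Φ.vMap I₂ = I)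
    (hst : Stable Φ I₁ I₂) (u : List H.E) (hu : IsPathFrom H I u) :
    Stable Φ (transPath Φ I₁ u) (transPath Φ I₂ u) := by
  subst h₁
  have hv1 : Φ.vMap (transPath Φ I₁ u) = pathEnd H (Φ.vMap I₁) u :=
    vMap_transPath Φ hΦ u I₁ hu
  have hv2 : Φ.vMap (transPath Φ I₂ u) = pathEnd H (Φ.vMap I₁) u := by
    rw [← h₂] at hu ⊢
    exact vMap_transPath Φ hΦ u I₂ hu
  refine ⟨hv1.trans hv2.symm, ?_⟩
  intro w hw
  rw [hv1] at hw
  have huw : IsPathFrom H (Φ.vMap I₁) (u ++ w) :=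
    isPathFrom_append H u _ w hu hw
  obtain ⟨v, hvp, heq⟩ := hst.2 (u ++ w) huw
  refine ⟨v, ?_, ?_⟩
  · rw [hv1, ← pathEnd_append]; exact hvp
  · have h1 : u ++ w ++ v = u ++ (w ++ v) := by simp
    rw [h1, transPath_append Φ I₁, transPath_append Φ I₂] at heq
    exact heq
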